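/- For a word x over alphabet A and a letter a ∈ A: x starts with a if and only if there exists a word z such that [a] ⊑ z, for every letter b ≠ a the word [b,a] is not a subword of z, z ⊑ x, and π_{A∖{a}}(x) ⊑ z. -/

import Mathlib

theorem starts_with_iff {A : Type*} [DecidableEq A] (x : List A) (a : A) :
    (∃ w, x = a :: w) ↔
      ∃ z : List A, [a].Sublist z ∧ (∀ b : A, b ≠ a → ¬ [b, a].Sublist z) ∧
        z.Sublist x ∧ (x.filter (fun c => decide (c ≠ a))).Sublist z := by
  constructor
  · rintro ⟨w, rfl⟩
    refine ⟨a :: w.filter (fun c => decide (c ≠ a)), ?_, ?_, ?_, ?_⟩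
    · simp
    · intro b hb hsub
      rcases List.sublist_cons_iff.1 hsub with h | ⟨r, hr, _⟩
      · have ha : a ∈ w.filter (fun c => decide (c ≠ a)) :=
          ((List.sublist_cons_self b [a]).trans h).subset (by simp)
        simp at ha
      · exact hb (by injection hr)
    · exact List.cons_sublist_cons.2 List.filter_sublist
    · simp
  · rintro ⟨z, ha, hno, hzx, hfz⟩
    have haz : a ∈ z := (List.singleton_sublist).1 ha
    obtain ⟨z', rfl⟩ : ∃ z', z = a :: z' := by
      cases z with
      | nil => simp at haz
      | cons b z' =>
        by_cases hb : b = a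
        · exact ⟨z', by rw [hb]⟩
        · exfalso
          apply hno b hb
          have h' : a ∈ z' := by
            rcases List.mem_cons.1 haz with h | h
            · exact absurd h.symm hb
            · exact h
          exact List.cons_sublist_cons.2 (List.singleton_sublist.2 h')
    cases x with
    | nil => simp at hzx
    | cons c w =>
      by_cases hc : c = a
      · exact ⟨w, by rw [hc]⟩
      · exfalso
        have hzw : (a :: z').Sublist w := by
          rcases List.sublist_cons_iff.1 hzx with h | ⟨r, hr, _⟩
          · exact h
          · exact absurd (by injection hr : a = c) fun h => hc h.symm
        have h1 : ((a :: z').countP (fun c => decide (c ≠ a))) ≤ w.countP (fun c => decide (c ≠ a)) :=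
          hzw.countP_le
        have h2 : ((c :: w).filter (fun c => decide (c ≠ a))).length ≤ (a :: z').countP (fun c => decide (c ≠ a)) := by
          have : _ ≤ (a :: z').countP (fun c => decide (c ≠ a)) := hfz.countP_le
          simpa [List.countP_filter, List.countP_eq_length_filter] using this
        rw [List.filter_cons, if_pos (by simp [hc])] at h2
        simp only [List.length_cons, ← List.countP_eq_length_filter] at h2
        omega
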